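/- If φ₁ and φ₂ both solve the CIR initial-value problem on [0,T), then φ₁ = φ₂ on [0,T). -/

import Mathlib

open Set Filter Topology

/-- Key comparison lemma: the shift `t ↦ φ₂ (t + δ)` is a strict supersolution
(because the right-hand side is strictly increasing in `t`), hence dominates `φ₁`. -/
lemma cir_shift_le (ε T δ : ℝ) (hε : 0 < ε) (hδ : 0 < δ)
    (ω φ₁ φ₂ : ℝ → ℝ)
    (hφ₁0 : φ₁ 0 = 0)
    (hφ₂pos : ∀ t ∈ Set.Ico (0:ℝ) T, 0 ≤ φ₂ t)
    (hode₁ : ∀ t ∈ Set.Ico (0:ℝ) T,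
      HasDerivAt φ₁ (ε⁻¹ * (ω (φ₁ t) + t - φ₁ t) + 1) t)
    (hode₂ : ∀ t ∈ Set.Ico (0:ℝ) T,
      HasDerivAt φ₂ (ε⁻¹ * (ω (φ₂ t) + t - φ₂ t) + 1) t) :
    ∀ t ∈ Set.Ico (0:ℝ) (T - δ), φ₁ t ≤ φ₂ (t + δ) := by
  by_contra hcon
  push_neg at hcon
  obtain ⟨t₁, ⟨ht₁0, ht₁T⟩, hlt⟩ := hcon
  set ρ : ℝ → ℝ := fun t => φ₂ (t + δ) - φ₁ t with hρ
  have hδT : δ < T := by linarith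
  have hmem₁ : ∀ t ∈ Icc (0:ℝ) t₁, t ∈ Ico (0:ℝ) T := by
    rintro t ⟨h0, h1⟩; exact ⟨h0, by linarith⟩
  have hmem₂ : ∀ t ∈ Icc (0:ℝ) t₁, t + δ ∈ Ico (0:ℝ) T := by
    rintro t ⟨h0, h1⟩; exact ⟨by linarith, by linarith⟩
  have hderiv : ∀ t ∈ Icc (0:ℝ) t₁, HasDerivAt ρ
      ((ε⁻¹ * (ω (φ₂ (t + δ)) + (t + δ) - φ₂ (t + δ)) + 1)
        - (ε⁻¹ * (ω (φ₁ t) + t - φ₁ t) + 1)) t := by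
    intro t ht
    have h2 := hode₂ (t + δ) (hmem₂ t ht)
    have h2' : HasDerivAt (fun s => φ₂ (s + δ))
        (ε⁻¹ * (ω (φ₂ (t + δ)) + (t + δ) - φ₂ (t + δ)) + 1) t := by
      have := h2.comp t ((hasDerivAt_id t).add_const δ)
      simp only [mul_one] at this; exact this
    exact h2'.sub (hode₁ t (hmem₁ t ht))
  set S : Set ℝ := {t | t ∈ Icc (0:ℝ) t₁ ∧ 0 ≤ ρ t} with hS
  have h0S : (0:ℝ) ∈ S := by
    refine ⟨⟨le_refl 0, ht₁0⟩, ?_⟩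
    have h1 : 0 ≤ φ₂ δ := hφ₂pos δ ⟨hδ.le, hδT⟩
    simp only [hρ, zero_add, hφ₁0, sub_zero]
    exact h1
  have hSne : S.Nonempty := ⟨0, h0S⟩
  have hSbdd : BddAbove S := ⟨t₁, fun t ht => ht.1.2⟩
  set c := sSup S with hc
  have hcIcc : c ∈ Icc (0:ℝ) t₁ :=
    ⟨le_csSup hSbdd h0S, csSup_le hSne fun t ht => ht.1.2⟩
  have hcont : ∀ t ∈ Icc (0:ℝ) t₁, ContinuousAt ρ t :=
    fun t ht => (hderiv t ht).continuousAt
  have hρc_nonneg : 0 ≤ ρ c := by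
    have hcl : c ∈ closure S := csSup_mem_closure hSne hSbdd
    have hne : (𝓝[S] c).NeBot := mem_closure_iff_nhdsWithin_neBot.mp hcl
    have htend : Tendsto ρ (𝓝[S] c) (𝓝 (ρ c)) :=
      (hcont c hcIcc).continuousWithinAt
    exact ge_of_tendsto htend (eventually_nhdsWithin_of_forall fun t ht => ht.2)
  have hct₁ : c < t₁ := by
    rcases lt_or_eq_of_le hcIcc.2 with h | h
    · exact h
    · exfalso
      rw [h] at hρc_nonneg
      have : ρ t₁ < 0 := sub_neg.mpr hlt
      linarith
  have hneg : ∀ t, c < t → t ≤ t₁ → ρ t < 0 := by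
    intro t h1 h2
    by_contra h
    push_neg at h
    have htS : t ∈ S := ⟨⟨le_trans hcIcc.1 h1.le, h2⟩, h⟩
    exact absurd (le_csSup hSbdd htS) (not_le.mpr h1)
  have hρc_nonpos : ρ c ≤ 0 := by
    have htend : Tendsto ρ (𝓝[>] c) (𝓝 (ρ c)) :=
      ((hcont c hcIcc).continuousWithinAt)
    refine le_of_tendsto htend ?_
    filter_upwards [Ioo_mem_nhdsGT_of_mem ⟨le_refl c, hct₁⟩] with t ht
    exact (hneg t ht.1 ht.2.le).le
  have hρc : ρ c = 0 := le_antisymm hρc_nonpos hρc_nonneg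
  have hkey : φ₂ (c + δ) = φ₁ c := by
    have := sub_eq_zero.mp hρc
    exact this
  have hdc : HasDerivAt ρ (ε⁻¹ * δ) c := by
    have h := hderiv c hcIcc
    rw [hkey] at h
    convert h using 1
    ring
  have hpos : 0 < ε⁻¹ * δ := by positivity
  have hslope := hasDerivAt_iff_tendsto_slope.mp hdc
  have hslope' : Tendsto (slope ρ c) (𝓝[>] c) (𝓝 (ε⁻¹ * δ)) :=
    hslope.mono_left (nhdsWithin_mono c fun x hx => hx.ne')
  have h1 : ∀ᶠ t in 𝓝[>] c, 0 < slope ρ c t :=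
    hslope'.eventually (eventually_gt_nhds hpos)
  have h2 : ∀ᶠ t in 𝓝[>] c, ρ t < 0 ∧ c < t := by
    filter_upwards [Ioo_mem_nhdsGT_of_mem ⟨le_refl c, hct₁⟩] with t ht
    exact ⟨hneg t ht.1 ht.2.le, ht.1⟩
  obtain ⟨t, hts, htρ, htc⟩ := (h1.and h2).exists
  have hslope_neg : slope ρ c t < 0 := by
    rw [slope_def_field, hρc, sub_zero]
    exact div_neg_of_neg_of_pos htρ (sub_pos.mpr htc)
  linarith

lemma cir_le (ε T : ℝ) (hε : 0 < ε)
    (ω φ₁ φ₂ : ℝ → ℝ)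
    (hφ₁0 : φ₁ 0 = 0)
    (hφ₂pos : ∀ t ∈ Set.Ico (0:ℝ) T, 0 ≤ φ₂ t)
    (hode₁ : ∀ t ∈ Set.Ico (0:ℝ) T,
      HasDerivAt φ₁ (ε⁻¹ * (ω (φ₁ t) + t - φ₁ t) + 1) t)
    (hode₂ : ∀ t ∈ Set.Ico (0:ℝ) T,
      HasDerivAt φ₂ (ε⁻¹ * (ω (φ₂ t) + t - φ₂ t) + 1) t) :
    ∀ t ∈ Set.Ico (0:ℝ) T, φ₁ t ≤ φ₂ t := by
  rintro t ⟨ht0, htT⟩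
  have hcont₂ : ContinuousAt φ₂ t := (hode₂ t ⟨ht0, htT⟩).continuousAt
  have htend : Tendsto (fun δ : ℝ => φ₂ (t + δ)) (𝓝[>] 0) (𝓝 (φ₂ t)) := by
    have h1 : Tendsto (fun δ : ℝ => t + δ) (𝓝 (0:ℝ)) (𝓝 t) := by
      have := (tendsto_const_nhds.add tendsto_id :
        Tendsto (fun δ : ℝ => t + δ) (𝓝 (0:ℝ)) (𝓝 (t + 0)))
      simpa using this
    exact hcont₂.tendsto.comp (h1.mono_left nhdsWithin_le_nhds)
  refine ge_of_tendsto htend ?_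
  filter_upwards [Ioo_mem_nhdsGT_of_mem ⟨le_refl (0:ℝ), sub_pos.mpr htT⟩] with δ hδ
  exact cir_shift_le ε T δ hε hδ.1 ω φ₁ φ₂ hφ₁0 hφ₂pos hode₁ hode₂ t
    ⟨ht0, by linarith [hδ.2]⟩

/-- Uniqueness of solutions of the CIR initial-value problem on [0,T). -/
theorem cir_ivp_unique (ε T : ℝ) (hε : 0 < ε) (hT : 0 < T)
    (ω φ₁ φ₂ : ℝ → ℝ) (hω : ContinuousOn ω (Set.Ici 0)) (hω0 : ω 0 = 0)
    (hφ₁0 : φ₁ 0 = 0) (hφ₂0 : φ₂ 0 = 0)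
    (hφ₁pos : ∀ t ∈ Set.Ico (0:ℝ) T, 0 ≤ φ₁ t)
    (hφ₂pos : ∀ t ∈ Set.Ico (0:ℝ) T, 0 ≤ φ₂ t)
    (hode₁ : ∀ t ∈ Set.Ico (0:ℝ) T,
      HasDerivAt φ₁ (ε⁻¹ * (ω (φ₁ t) + t - φ₁ t) + 1) t)
    (hode₂ : ∀ t ∈ Set.Ico (0:ℝ) T,
      HasDerivAt φ₂ (ε⁻¹ * (ω (φ₂ t) + t - φ₂ t) + 1) t) :
    ∀ t ∈ Set.Ico (0:ℝ) T, φ₁ t = φ₂ t := by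
  intro t ht
  exact le_antisymm
    (cir_le ε T hε ω φ₁ φ₂ hφ₁0 hφ₂pos hode₁ hode₂ t ht)
    (cir_le ε T hε ω φ₂ φ₁ hφ₂0 hφ₁pos hode₂ hode₁ t ht)
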